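/- arXiv:2302.05233 — 2 statements merged into one kernel-verified Lean document; each statement's English description precedes it below -/
import Mathlib

section
/- Let M be a Lie monoid and X a left-invariant vector field on M (i.e., d(L_g)_h(X_h) = X_{gh} for all g, h). If γ is the maximal integral curve of X starting at the identity e, defined on the interval J_e, then for every g ∈ M the curve t ↦ g·γ(t) is an integral curve of X starting at g; consequently J_e ⊆ J_g, and the flow satisfies φ_t(g) = g·γ(t) for t ∈ J_e. -/
open Set

/-- The Dec-2024 Mathlib meaning of `IsIntegralCurveOn` on a manifold: `γ` has (full,
not within-`s`) manifold derivative `v (γ t)` at every `t ∈ s`. -/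
def IsIntegralCurveOnOld {E H : Type*} [NormedAddCommGroup E] [NormedSpace ℝ E]
    [TopologicalSpace H] {I : ModelWithCorners ℝ E H}
    {M : Type*} [TopologicalSpace M] [ChartedSpace H M]
    (γ : ℝ → M) (v : (x : M) → TangentSpace I x) (s : Set ℝ) : Prop :=
  ∀ t ∈ s, HasMFDerivAt (modelWithCornersSelf ℝ ℝ) I γ t ((1 : ℝ →L[ℝ] ℝ).smulRight <| v (γ t))

theorem mul_integral_curve_aux {E H : Type*} [NormedAddCommGroup E] [NormedSpace ℝ E]
    [TopologicalSpace H] (I : ModelWithCorners ℝ E H)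
    (M : Type*) [TopologicalSpace M] [ChartedSpace H M] [Monoid M]
    [IsManifold I (⊤ : ℕ∞) M] [ContMDiffMul I (⊤ : ℕ∞) M]
    (X : (g : M) → TangentSpace I g)
    (hX : ∀ g h : M, mfderiv I I (fun k => g * k) h (X h) = X (g * h))
    (γ : ℝ → M) (J : Set ℝ) (hγ : IsIntegralCurveOnOld γ X J) (g : M) :
    IsIntegralCurveOnOld (fun t => g * γ t) X J := by
  intro t ht
  have h1 : HasMFDerivAt I I (fun k => g * k) (γ t)
      (mfderiv I I (fun k => g * k) (γ t)) :=
    ((contMDiff_mul_left (G := M) (n := ((⊤ : ℕ∞) : WithTop ℕ∞)) (a := g)).mdifferentiableAt (by simp)).hasMFDerivAt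
  have h2 : HasMFDerivAt (modelWithCornersSelf ℝ ℝ) I (fun t => g * γ t) t
      ((mfderiv I I (fun k => g * k) (γ t)).comp ((1 : ℝ →L[ℝ] ℝ).smulRight (X (γ t)))) :=
    h1.comp t (hγ t ht)
  have e : (mfderiv I I (fun k => g * k) (γ t)).comp ((1 : ℝ →L[ℝ] ℝ).smulRight (X (γ t))) =
      (1 : ℝ →L[ℝ] ℝ).smulRight (X (g * γ t)) := by
    ext
    simp [hX g (γ t)]
  exact h2.congr_mfderiv e

/-- Let `M` be a Lie monoid and `X` a left-invariant vector field on `M`.  If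
`γ` is an integral curve of `X` on `J` starting at the identity, then for every
`g ∈ M` the curve `t ↦ g * γ t` is an integral curve of `X` on `J` starting at
`g`; consequently `J ⊆ J_g` for the domain `J_g` of the maximal integral curve
`γ_g` through `g`, and the flow satisfies `γ_g t = g * γ t` on `J`. -/
theorem stmt_12 {E H : Type*} [NormedAddCommGroup E] [NormedSpace ℝ E]
    [TopologicalSpace H] (I : ModelWithCorners ℝ E H)
    (M : Type*) [TopologicalSpace M] [ChartedSpace H M] [Monoid M]
    [IsManifold I (⊤ : ℕ∞) M] [ContMDiffMul I (⊤ : ℕ∞) M]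
    (X : (g : M) → TangentSpace I g)
    (hX : ∀ g h : M, mfderiv I I (fun k => g * k) h (X h) = X (g * h))
    (γ : ℝ → M) (J : Set ℝ) (hγ : IsIntegralCurveOnOld γ X J) (hγ0 : γ 0 = 1) :
    ∀ g : M,
      (IsIntegralCurveOnOld (fun t => g * γ t) X J ∧ g * γ 0 = g) ∧
      ∀ (γg : ℝ → M) (Jg : Set ℝ), IsIntegralCurveOnOld γg X Jg → γg 0 = g →
        -- maximality of `(γg, Jg)`: every integral curve through `g` is a
        -- restriction of `γg`
        (∀ (σ : ℝ → M) (J' : Set ℝ), IsIntegralCurveOnOld σ X J' → σ 0 = g →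
          J' ⊆ Jg ∧ Set.EqOn σ γg J') →
        J ⊆ Jg ∧ ∀ t ∈ J, γg t = g * γ t := by
  intro g
  have hcurve := mul_integral_curve_aux I M X hX γ J hγ g
  have hstart : g * γ 0 = g := by rw [hγ0, mul_one]
  refine ⟨⟨hcurve, hstart⟩, ?_⟩
  intro γg Jg _ _ hmax
  obtain ⟨hsub, heq⟩ := hmax (fun t => g * γ t) J hcurve hstart
  exact ⟨hsub, fun t ht => (heq ht).symm⟩
end

section
/- Let M be a Lie monoid whose identity lies in the interior of M. Then the image of the maximal integral curve through e of any left-invariant vector field X is contained in the group of invertible elements of M: for each t in the (full) domain, φ_{−t}(e) is a two-sided inverse of φ_t(e). -/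
open Set

section Helpers

open Function Filter

open scoped Manifold Topology

variable
  {E : Type*} [NormedAddCommGroup E] [NormedSpace ℝ E]
  {H : Type*} [TopologicalSpace H] {I : ModelWithCorners ℝ E H}
  {M : Type*} [TopologicalSpace M] [ChartedSpace H M] [IsManifold I (⊤ : ℕ∞) M]

/-- Generalization of `IsMIntegralCurveAt.eventually_hasDerivAt` to an arbitrary chart
base point `z₀` whose chart source contains `γ t₀`. -/
lemma IsMIntegralCurveAt.eventually_hasDerivAt' {γ : ℝ → M} {v : (x : M) → TangentSpace I x}
    {t₀ : ℝ} (hγ : IsMIntegralCurveAt γ v t₀) (z₀ : M)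
    (hsrc0 : γ t₀ ∈ (extChartAt I z₀).source) :
    ∀ᶠ t in 𝓝 t₀, HasDerivAt ((extChartAt I z₀) ∘ γ)
      (tangentCoordChange I (γ t) z₀ (γ t) (v (γ t))) t := by
  apply eventually_mem_nhds_iff.mpr
    (hγ.continuousAt.preimage_mem_nhds (extChartAt_source_mem_nhds' (I := I) hsrc0))
    |>.and hγ |>.mono
  rintro t ⟨ht1, ht2⟩
  have hsrc := mem_of_mem_nhds ht1
  rw [mem_preimage, extChartAt_source I z₀] at hsrc
  rw [hasDerivAt_iff_hasFDerivAt]; refine hasMFDerivAt_iff_hasFDerivAt.mp ?_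
  apply (HasMFDerivAt.comp t (hasMFDerivAt_extChartAt (I := I) hsrc) ht2).congr_mfderiv
  refine ContinuousLinearMap.ext fun (a : ℝ) => ?_
  change mfderiv I I (chartAt H z₀) (γ t) (a • v (γ t)) =
    a • tangentCoordChange I (γ t) z₀ (γ t) (v (γ t))
  rw [map_smul, mfderiv_chartAt_eq_tangentCoordChange hsrc]
  rfl

/-- Local uniqueness of integral curves, generalized so that the chart used may be based
at an arbitrary point `z₀`, provided the common initial value lies in this chart's source and
is mapped into the interior of the model range. -/
theorem isIntegralCurveAt_eventuallyEq_of_contMDiffAt' {γ γ' : ℝ → M}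
    {v : (x : M) → TangentSpace I x} {t₀ : ℝ} (z₀ : M)
    (hq : γ t₀ ∈ (extChartAt I z₀).source)
    (hq' : extChartAt I z₀ (γ t₀) ∈ interior (range I))
    (hv : ContMDiffAt I I.tangent 1 (fun x ↦ (⟨x, v x⟩ : TangentBundle I M)) (γ t₀))
    (hγ : IsMIntegralCurveAt γ v t₀) (hγ' : IsMIntegralCurveAt γ' v t₀) (h : γ t₀ = γ' t₀) :
    γ =ᶠ[𝓝 t₀] γ' := by
  set v' : E → E := fun x ↦
    tangentCoordChange I ((extChartAt I z₀).symm x) z₀ ((extChartAt I z₀).symm x)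
      (v ((extChartAt I z₀).symm x)) with hv'
  have hsrcH : γ t₀ ∈ (chartAt H z₀).source := by rwa [← extChartAt_source I]
  rw [contMDiffAt_iff_of_mem_source (x := z₀) (y := (⟨z₀, v z₀⟩ : TangentBundle I M)) hsrcH
    (by rw [TangentBundle.mem_chart_source_iff]; exact hsrcH)] at hv
  obtain ⟨_, hv⟩ := hv
  obtain ⟨K, s, hs, hlip⟩ : ∃ K, ∃ s ∈ 𝓝 (extChartAt I z₀ (γ t₀)), LipschitzOnWith K v' s :=
    (hv.contDiffAt (mem_nhds_iff.mpr
      ⟨interior (range I), interior_subset, isOpen_interior, hq'⟩)).snd.exists_lipschitzOnWith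
  have hlip' : ∀ t : ℝ, LipschitzOnWith K ((fun _ ↦ v') t) ((fun _ ↦ s) t) := fun _ ↦ hlip
  have hsrc : ∀ {g : ℝ → M}, IsMIntegralCurveAt g v t₀ → g t₀ = γ t₀ →
      ∀ᶠ t in 𝓝 t₀, g ⁻¹' (extChartAt I z₀).source ∈ 𝓝 t := fun hg hg' ↦
    eventually_mem_nhds_iff.mpr <| continuousAt_def.mp hg.continuousAt _ <|
      extChartAt_source_mem_nhds' (hg' ▸ hq)
  have hmem : ∀ {g : ℝ → M} {t : ℝ}, g ⁻¹' (extChartAt I z₀).source ∈ 𝓝 t →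
      g t ∈ (extChartAt I z₀).source := fun ht ↦ mem_preimage.mp <| mem_of_mem_nhds ht
  have hdrv : ∀ {g : ℝ → M}, IsMIntegralCurveAt g v t₀ → g t₀ = γ t₀ → (∀ᶠ t in 𝓝 t₀,
      HasDerivAt ((extChartAt I z₀) ∘ g) ((fun _ ↦ v') t (((extChartAt I z₀) ∘ g) t)) t ∧
      ((extChartAt I z₀) ∘ g) t ∈ (fun _ ↦ s) t) := by
    intro g hg hg'
    apply Filter.Eventually.and
    · apply ((hsrc hg hg').and (hg.eventually_hasDerivAt' z₀ (hg' ▸ hq))).mono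
      rintro t ⟨ht1, ht2⟩
      rw [hv']
      apply ht2.congr_deriv
      congr <;> rw [Function.comp_apply, PartialEquiv.left_inv _ (hmem ht1)]
    · apply ((continuousAt_extChartAt' (hg' ▸ hq)).comp hg.continuousAt).preimage_mem_nhds
      rw [Function.comp_apply, hg']
      exact hs
  have heq : ∀ {g : ℝ → M}, IsMIntegralCurveAt g v t₀ → g t₀ = γ t₀ →
      g =ᶠ[𝓝 t₀] (extChartAt I z₀).symm ∘ ↑(extChartAt I z₀) ∘ g := by
    intro g hg hg'
    apply (hsrc hg hg').mono
    intro t ht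
    rw [Function.comp_apply, Function.comp_apply, PartialEquiv.left_inv _ (hmem ht)]
  have hmain : (extChartAt I z₀) ∘ γ =ᶠ[𝓝 t₀] (extChartAt I z₀) ∘ γ' :=
    ODE_solution_unique_of_eventually (.of_forall hlip') (hdrv hγ rfl) (hdrv hγ' h.symm)
      (by rw [Function.comp_apply, Function.comp_apply, h])
  exact (heq hγ rfl).trans <| (hmain.fun_comp (extChartAt I z₀).symm).trans (heq hγ' h.symm).symm

set_option linter.unusedSectionVars false in
/-- Left translates of integral curves of a left-invariant vector field are integral curves. -/
lemma isIntegralCurveOn_leftMul {M : Type*} [TopologicalSpace M] [ChartedSpace H M] [Monoid M]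
    [IsManifold I (⊤ : ℕ∞) M] [ContMDiffMul I (⊤ : ℕ∞) M] {X : (g : M) → TangentSpace I g}
    (hX : ∀ g h : M, mfderiv I I (fun k => g * k) h (X h) = X (g * h))
    {γ : ℝ → M} (hγ : IsMIntegralCurveOn γ X univ) (g : M) :
    IsMIntegralCurveOn (fun t ↦ g * γ t) X univ := by
  intro t ht
  have h1 : HasMFDerivAt I I (fun k ↦ g * k) (γ t) (mfderiv I I (fun k ↦ g * k) (γ t)) :=
    ((contMDiff_mul_left (I := I) (n := ((⊤ : ℕ∞) : WithTop ℕ∞))).contMDiffAt.mdifferentiableAt (by simp)).hasMFDerivAt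
  have h2 := h1.comp t (hasMFDerivWithinAt_univ.mp (hγ t ht))
  apply hasMFDerivWithinAt_univ.mpr
  apply h2.congr_mfderiv
  refine ContinuousLinearMap.ext fun (a : ℝ) => ?_
  change mfderiv I I (fun k ↦ g * k) (γ t) (a • X (γ t)) = a • X (g * γ t)
  rw [map_smul, hX]

set_option linter.unusedSectionVars false in
/-- Time translates of global integral curves are integral curves. -/
lemma isIntegralCurveOn_shift {X : (g : M) → TangentSpace I g}
    {γ : ℝ → M} (hγ : IsMIntegralCurveOn γ X univ) (c : ℝ) :
    IsMIntegralCurveOn (fun t ↦ γ (c + t)) X univ := by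
  intro t _
  have h := (hγ.comp_add c) t (by simp)
  have heq : (fun s : ℝ ↦ γ (c + s)) = γ ∘ (· + c) := by
    funext u; simp [add_comm]
  rw [heq]
  simpa [Function.comp, add_comm] using h

end Helpers

/-- Let `M` be a Lie monoid whose identity lies in the interior of `M`, and let
`X` be a left-invariant vector field with complete integral curve `γ` through
the identity.  Then the image of `γ` consists of invertible elements: for every
`t`, `γ (-t)` is a two-sided inverse of `γ t`. -/
theorem stmt_14 {E H : Type*} [NormedAddCommGroup E] [NormedSpace ℝ E]
    [TopologicalSpace H] (I : ModelWithCorners ℝ E H)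
    (M : Type*) [TopologicalSpace M] [ChartedSpace H M] [Monoid M]
    [IsManifold I (⊤ : ℕ∞) M] [ContMDiffMul I (⊤ : ℕ∞) M]
    (h1 : (1 : M) ∈ I.interior M)
    (X : (g : M) → TangentSpace I g)
    (hX : ∀ g h : M, mfderiv I I (fun k => g * k) h (X h) = X (g * h))
    (hXsmooth : ContMDiff I I.tangent (⊤ : ℕ∞) (fun g => (⟨g, X g⟩ : TangentBundle I M)))
    (γ : ℝ → M) (hγ : IsMIntegralCurveOn γ X Set.univ) (hγ0 : γ 0 = 1) :
    ∀ t : ℝ, γ (-t) * γ t = 1 ∧ γ t * γ (-t) = 1 ∧ IsUnit (γ t) := by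
  haveI : T1Space M := I.t1Space M
  haveI : ContinuousMul M := continuousMul_of_contMDiffMul I (⊤ : ℕ∞)
  have hcont : Continuous γ := continuous_iff_continuousAt.mpr fun t ↦ (continuousWithinAt_univ _ _).mp (hγ t trivial).1
  -- the good neighbourhood `V` of `1`
  set V : Set M := (extChartAt I (1 : M)).source ∩
      (extChartAt I (1 : M)) ⁻¹' (interior (range I)) with hV
  have hVopen : IsOpen V :=
    (continuousOn_extChartAt (1 : M)).isOpen_inter_preimage (isOpen_extChartAt_source _)
      isOpen_interior
  have h1V : (1 : M) ∈ V := ⟨mem_extChartAt_source _, h1⟩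
  -- local uniqueness specialised to our situation
  have huniq : ∀ (α β : ℝ → M) (t₁ : ℝ), IsMIntegralCurveOn α X univ →
      IsMIntegralCurveOn β X univ → α t₁ = β t₁ → α t₁ ∈ V → α =ᶠ[nhds t₁] β := by
    intro α β t₁ hα hβ hab haV
    exact isIntegralCurveAt_eventuallyEq_of_contMDiffAt' (1 : M) haV.1 haV.2
      ((hXsmooth (α t₁)).of_le (by exact_mod_cast le_top)) (hα.isMIntegralCurveAt Filter.univ_mem)
      (hβ.isMIntegralCurveAt Filter.univ_mem) hab
  -- choose the basic scale δ
  have hmul0 : ContinuousAt (fun p : ℝ × ℝ ↦ γ p.1 * γ p.2) (0, 0) :=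
    ((hcont.comp continuous_fst).mul (hcont.comp continuous_snd)).continuousAt
  have h00 : (fun p : ℝ × ℝ ↦ γ p.1 * γ p.2) (0, 0) ∈ V := by
    simpa [hγ0] using h1V
  obtain ⟨a, ha0, hball⟩ := Metric.mem_nhds_iff.mp (hmul0.preimage_mem_nhds (hVopen.mem_nhds h00))
  set δ : ℝ := a / 23 with hδdef
  have hδ : 0 < δ := by positivity
  have hZ : ∀ u w : ℝ, |u| ≤ 22 * δ → |w| ≤ 22 * δ → γ u * γ w ∈ V := by
    intro u w hu hw
    have h22 : 22 * δ < a := by rw [hδdef]; linarith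
    have hmem : (u, w) ∈ Metric.ball ((0:ℝ), (0:ℝ)) a := by
      rw [Metric.mem_ball, Prod.dist_eq]
      simp only [Real.dist_eq, sub_zero]
      exact max_lt (lt_of_le_of_lt hu h22) (lt_of_le_of_lt hw h22)
    exact hball hmem
  have hZ1 : ∀ u : ℝ, |u| ≤ 22 * δ → γ u ∈ V := by
    intro u hu
    have := hZ u 0 hu (by rw [abs_zero]; positivity)
    simpa [hγ0] using this
  -- the local flow property
  have LF2 : ∀ s h : ℝ, |s| ≤ 5 * δ → |h| ≤ 5 * δ → γ (s + h) = γ s * γ h := by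
    intro s h hs hh
    set α : ℝ → M := fun u ↦ γ (s + u) with hα
    set β : ℝ → M := fun u ↦ γ s * γ u with hβ
    have hαint : IsMIntegralCurveOn α X univ := isIntegralCurveOn_shift hγ s
    have hβint : IsMIntegralCurveOn β X univ := isIntegralCurveOn_leftMul hX hγ (γ s)
    have hαcont : Continuous α := hcont.comp (continuous_const.add continuous_id)
    have hβcont : Continuous β := continuous_const.mul hcont
    set S : Set ℝ := {u | u ∈ Ioo (-(6 * δ)) (6 * δ) ∧ α u = β u} with hS
    have hαV : ∀ u ∈ Ioo (-(6 * δ)) (6 * δ), α u ∈ V := by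
      intro u hu
      apply hZ1
      have hu6 : |u| < 6 * δ := abs_lt.mpr ⟨hu.1, hu.2⟩
      calc |s + u| ≤ |s| + |u| := abs_add_le _ _
        _ ≤ 22 * δ := by linarith
    have hβV : ∀ u ∈ Ioo (-(6 * δ)) (6 * δ), β u ∈ V := by
      intro u hu
      have hu6 : |u| < 6 * δ := abs_lt.mpr ⟨hu.1, hu.2⟩
      exact hZ s u (by linarith) (by linarith)
    have hSopen : IsOpen S := by
      rw [isOpen_iff_mem_nhds]
      rintro u ⟨huJ, hu⟩
      have hev := huniq α β u hαint hβint hu (hαV u huJ)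
      filter_upwards [hev, isOpen_Ioo.mem_nhds huJ] with x h1x h2x
      exact ⟨h2x, h1x⟩
    have hScl : closure S ∩ Ioo (-(6 * δ)) (6 * δ) ⊆ S := by
      rintro u ⟨hucl, huJ⟩
      refine ⟨huJ, ?_⟩
      have hαu : α u ∈ V := hαV u huJ
      have hβu : β u ∈ V := hβV u huJ
      have hfc : ContinuousAt (fun x ↦ extChartAt I (1 : M) (α x)) u :=
        (continuousAt_extChartAt' hαu.1).comp hαcont.continuousAt
      have hgc : ContinuousAt (fun x ↦ extChartAt I (1 : M) (β x)) u :=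
        (continuousAt_extChartAt' hβu.1).comp hβcont.continuousAt
      haveI hne : (nhdsWithin u S).NeBot := mem_closure_iff_nhdsWithin_neBot.mp hucl
      have heq' : (fun x ↦ extChartAt I (1 : M) (α x)) =ᶠ[nhdsWithin u S]
          (fun x ↦ extChartAt I (1 : M) (β x)) := by
        filter_upwards [self_mem_nhdsWithin] with x hx
        rw [hx.2]
      have hlim : extChartAt I (1 : M) (α u) = extChartAt I (1 : M) (β u) :=
        tendsto_nhds_unique (Filter.Tendsto.congr' heq' hfc.continuousWithinAt)
          hgc.continuousWithinAt
      exact (extChartAt I (1 : M)).injOn hαu.1 hβu.1 hlim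
    have hS0 : (0 : ℝ) ∈ S := by
      refine ⟨⟨by linarith, by linarith⟩, ?_⟩
      show γ (s + 0) = γ s * γ 0
      rw [add_zero, hγ0, mul_one]
    have hJS : Ioo (-(6 * δ)) (6 * δ) ⊆ S :=
      isPreconnected_Ioo.subset_of_closure_inter_subset hSopen ⟨0, hS0.1, hS0⟩ hScl
    have hhJ : h ∈ Ioo (-(6 * δ)) (6 * δ)  := by
      have := abs_le.mp hh
      exact ⟨by linarith [this.1], by linarith [this.2]⟩
    exact (hJS hhJ).2
  -- inverses from the two-sided flow property
  have unitsOf : ∀ (N : ℕ),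
      (∀ a b : ℝ, |a| ≤ (N + 5) * δ → |b| ≤ 4 * δ →
        (γ (a + b) = γ a * γ b ∧ γ (a + b) = γ b * γ a)) →
      ∀ c : ℝ, |c| ≤ (N + 5) * δ → γ c * γ (-c) = 1 ∧ γ (-c) * γ c = 1 := by
    intro N hD
    have base : ∀ c : ℝ, |c| ≤ 5 * δ → γ c * γ (-c) = 1 ∧ γ (-c) * γ c = 1 := by
      intro c hc
      have h1' := LF2 c (-c) hc (by rwa [abs_neg])
      have h2' := LF2 (-c) c (by rwa [abs_neg]) hc
      rw [add_neg_cancel, hγ0] at h1'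
      rw [neg_add_cancel, hγ0] at h2'
      exact ⟨h1'.symm, h2'.symm⟩
    have main : ∀ m : ℕ, ∀ c : ℝ, |c| ≤ (m + 5) * δ → |c| ≤ (N + 5) * δ →
        γ c * γ (-c) = 1 ∧ γ (-c) * γ c = 1 := by
      intro m
      induction m with
      | zero =>
        intro c hc _
        exact base c (by simpa using hc)
      | succ m ihm =>
        intro c hc hcN
        by_cases hsmall : |c| ≤ (m + 5) * δ
        · exact ihm c hsmall hcN
        · push_neg at hsmall
          have hmn : (0:ℝ) ≤ (m:ℝ) * δ := mul_nonneg (Nat.cast_nonneg m) hδ.le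
          have hexp : ((m:ℝ) + 5) * δ = (m:ℝ) * δ + 5 * δ := by ring
          have h5 : 5 * δ < |c| := by rw [hexp] at hsmall; linarith
          set r : ℝ := if 0 ≤ c then δ else -δ with hrdef
          set c' : ℝ := c - r with hc'def
          have habsr : |r| = δ := by
            rw [hrdef]; split
            · exact abs_of_pos hδ
            · rw [abs_neg]; exact abs_of_pos hδ
          have habs' : |c'| = |c| - δ := by
            rcases le_or_gt 0 c with h0 | h0
            · have hcpos : |c| = c := abs_of_nonneg h0
              have hc'eq : c' = c - δ := by rw [hc'def, hrdef, if_pos h0]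
              rw [hc'eq, hcpos, abs_of_nonneg (by rw [hcpos] at h5; linarith)]
            · have hcneg : |c| = -c := abs_of_neg h0
              have hc'eq : c' = c + δ := by rw [hc'def, hrdef, if_neg (not_le.mpr h0)]; ring
              rw [hc'eq, hcneg, abs_of_neg (by rw [hcneg] at h5; linarith)]
              ring
          have hcast : ((m + 1 : ℕ) : ℝ) + 5 = (m : ℝ) + 6 := by push_cast; ring
          have hc6 : |c| ≤ ((m:ℝ) + 6) * δ := by rw [← hcast]; exact hc
          have hc'm : |c'| ≤ ((m:ℝ) + 5) * δ := by
            rw [habs']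
            have : ((m:ℝ) + 6) * δ = ((m:ℝ) + 5) * δ + δ := by ring
            linarith [hc6, this.le, this.ge]
          have hc'N : |c'| ≤ ((N:ℝ) + 5) * δ := by rw [habs']; linarith
          have hr4 : |r| ≤ 4 * δ := by rw [habsr]; linarith
          have habs'' : |c' - r| ≤ ((N:ℝ) + 5) * δ := by
            rcases le_or_gt 0 c with h0 | h0
            · have heq2 : c' - r = c - 2*δ := by rw [hc'def, hrdef, if_pos h0]; ring
              have hcpos : |c| = c := abs_of_nonneg h0
              rw [heq2, abs_of_nonneg (by rw [hcpos] at h5; linarith)]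
              rw [hcpos] at hcN; linarith
            · have heq2 : c' - r = c + 2*δ := by rw [hc'def, hrdef, if_neg (not_le.mpr h0)]; ring
              have hcneg : |c| = -c := abs_of_neg h0
              rw [heq2, abs_of_neg (by rw [hcneg] at h5; linarith)]
              rw [hcneg] at hcN; linarith
          have e1 : γ c = γ c' * γ r := by
            have := (hD c' r hc'N hr4).1
            rwa [show c' + r = c by rw [hc'def]; ring] at this
          have e2 : γ (-c) = γ (-c') * γ (-r) := by
            have := (hD (-c') (-r) (by rwa [abs_neg]) (by rwa [abs_neg])).1
            rwa [show -c' + -r = -c by rw [hc'def]; ring] at this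
          have e2' : γ (-c) = γ (-r) * γ (-c') := by
            have := (hD (-c') (-r) (by rwa [abs_neg]) (by rwa [abs_neg])).2
            rwa [show -c' + -r = -c by rw [hc'def]; ring] at this
          have hur : γ r * γ (-r) = 1 ∧ γ (-r) * γ r = 1 := base r (by rw [habsr]; linarith)
          have hmid : γ (-r) * γ c' = γ (c' - r) := by
            have := (hD c' (-r) hc'N (by rwa [abs_neg])).2
            rw [show c' + -r = c' - r by ring] at this
            exact this.symm
          have hmid2 : γ (c' - r) * γ r = γ c' := by
            have := (hD (c' - r) r habs'' hr4).1
            rw [show c' - r + r = c' by ring] at this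
            exact this.symm
          have hu' := ihm c' hc'm hc'N
          constructor
          · rw [e1, e2', mul_assoc, ← mul_assoc (γ r), hur.1, one_mul, hu'.1]
          · rw [e2, e1, mul_assoc, ← mul_assoc (γ (-r)), hmid, hmid2, hu'.2]
    exact fun c hc ↦ main N c hc hc
  -- the master induction
  have D : ∀ n : ℕ, ∀ a b : ℝ, |a| ≤ (n + 5) * δ → |b| ≤ 4 * δ →
      γ (a + b) = γ a * γ b ∧ γ (a + b) = γ b * γ a := by
    intro n
    induction n with
    | zero =>
      intro a b ha hb
      have ha5 : |a| ≤ 5 * δ := by simpa using ha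
      have hb5 : |b| ≤ 5 * δ := by linarith
      exact ⟨LF2 a b ha5 hb5, by rw [add_comm]; exact LF2 b a hb5 ha5⟩
    | succ n ih =>
      have hnδ : (0:ℝ) ≤ (n:ℝ) * δ := mul_nonneg (Nat.cast_nonneg n) hδ.le
      have hexp : ((n:ℝ) + 5) * δ = (n:ℝ) * δ + 5 * δ := by ring
      have units := unitsOf n ih
      -- the analytic continuation step
      have FE : ∀ σ r : ℝ, |σ| ≤ ((n:ℝ) + 5) * δ → |r| ≤ 4 * δ → ∀ b : ℝ, |b| ≤ 4 * δ →
          γ (σ + r + b) = γ (σ + r) * γ b := by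
        intro σ r hσ hr
        have hr5 : |r| ≤ ((n:ℝ) + 5) * δ := by rw [hexp]; linarith
        have e1 : γ (σ + r) = γ σ * γ r := (ih σ r hσ hr).1
        have e2 : γ (-(σ + r)) = γ (-σ) * γ (-r) := by
          have := (ih (-σ) (-r) (by rwa [abs_neg]) (by rwa [abs_neg])).1
          rwa [show -σ + -r = -(σ + r) by ring] at this
        have e2' : γ (-(σ + r)) = γ (-r) * γ (-σ) := by
          have := (ih (-σ) (-r) (by rwa [abs_neg]) (by rwa [abs_neg])).2
          rwa [show -σ + -r = -(σ + r) by ring] at this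
        have hur := units r hr5
        have huσ := units σ hσ
        have hswap : γ (-r) * γ σ = γ σ * γ (-r) := by
          have h1' := (ih σ (-r) hσ (by rwa [abs_neg])).1
          have h2' := (ih σ (-r) hσ (by rwa [abs_neg])).2
          rw [h1'] at h2'; exact h2'.symm
        have hua : γ (σ + r) * γ (-(σ + r)) = 1 := by
          rw [e1, e2', mul_assoc, ← mul_assoc (γ r), hur.1, one_mul, huσ.1]
        have hua' : γ (-(σ + r)) * γ (σ + r) = 1 := by
          rw [e2, e1, mul_assoc, ← mul_assoc (γ (-r)), hswap, mul_assoc (γ σ), hur.2, mul_one,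
            huσ.2]
        set W : ℝ → M := fun u ↦ γ (-(σ + r)) * γ ((σ + r) + u) with hWdef
        have hWint : IsMIntegralCurveOn W X univ :=
          isIntegralCurveOn_leftMul hX (isIntegralCurveOn_shift hγ (σ + r)) (γ (-(σ + r)))
        have hWcont : Continuous W :=
          continuous_const.mul (hcont.comp (continuous_const.add continuous_id))
        have haux : ∀ u : ℝ, u ∈ Ioo (-(5 * δ)) (5 * δ) → |u| ≤ ((n:ℝ) + 5) * δ := by
          intro u hu
          have := abs_lt.mpr ⟨hu.1, hu.2⟩
          rw [hexp]; linarith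
        set S : Set ℝ := {u | u ∈ Ioo (-(5 * δ)) (5 * δ) ∧ W u = γ u} with hSdef
        have hS0 : (0 : ℝ) ∈ S := by
          refine ⟨⟨by linarith, by linarith⟩, ?_⟩
          show γ (-(σ + r)) * γ ((σ + r) + 0) = γ 0
          rw [add_zero, hua', hγ0]
        have hSopen : IsOpen S := by
          rw [isOpen_iff_mem_nhds]
          rintro u₀ ⟨hu₀J, hu₀⟩
          have huu := units u₀ (haux u₀ hu₀J)
          have hWtint : IsMIntegralCurveOn (fun u ↦ γ (-u₀) * W u) X univ :=
            isIntegralCurveOn_leftMul hX hWint (γ (-u₀))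
          have hγtint : IsMIntegralCurveOn (fun u ↦ γ (-u₀) * γ u) X univ :=
            isIntegralCurveOn_leftMul hX hγ (γ (-u₀))
          have hval : (fun u ↦ γ (-u₀) * W u) u₀ = (fun u ↦ γ (-u₀) * γ u) u₀ := by
            show γ (-u₀) * W u₀ = γ (-u₀) * γ u₀
            rw [hu₀]
          have hval1 : (fun u ↦ γ (-u₀) * W u) u₀ ∈ V := by
            show γ (-u₀) * W u₀ ∈ V
            rw [hu₀, huu.2]
            exact h1V
          have hev := huniq _ _ u₀ hWtint hγtint hval hval1
          filter_upwards [hev, isOpen_Ioo.mem_nhds hu₀J] with x h1x h2x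
          refine ⟨h2x, ?_⟩
          have h1x' : γ (-u₀) * W x = γ (-u₀) * γ x := h1x
          calc W x = (γ u₀ * γ (-u₀)) * W x := by rw [huu.1, one_mul]
            _ = γ u₀ * (γ (-u₀) * W x) := mul_assoc _ _ _
            _ = γ u₀ * (γ (-u₀) * γ x) := by rw [h1x']
            _ = (γ u₀ * γ (-u₀)) * γ x := (mul_assoc _ _ _).symm
            _ = γ x := by rw [huu.1, one_mul]
        have hKcl : IsClosed {u : ℝ | W u * γ (-u) = 1} :=
          isClosed_singleton.preimage (hWcont.mul (hcont.comp continuous_neg))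
        have hScl : closure S ∩ Ioo (-(5 * δ)) (5 * δ) ⊆ S := by
          rintro u ⟨hucl, huJ⟩
          have huu := units u (haux u huJ)
          have hK1 : W u * γ (-u) = 1 := by
            have hsub : S ⊆ {u : ℝ | W u * γ (-u) = 1} := by
              rintro x ⟨hxJ, hx⟩
              show W x * γ (-x) = 1
              rw [hx]
              exact (units x (haux x hxJ)).1
            exact closure_minimal hsub hKcl hucl
          refine ⟨huJ, ?_⟩
          calc W u = W u * (γ (-u) * γ u) := by rw [huu.2, mul_one]
            _ = (W u * γ (-u)) * γ u := (mul_assoc _ _ _).symm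
            _ = γ u := by rw [hK1, one_mul]
        have hJS : Ioo (-(5 * δ)) (5 * δ) ⊆ S :=
          isPreconnected_Ioo.subset_of_closure_inter_subset hSopen ⟨0, hS0.1, hS0⟩ hScl
        intro b hb
        have hbJ : b ∈ Ioo (-(5 * δ)) (5 * δ) := by
          have := abs_le.mp hb
          exact ⟨by linarith [this.1], by linarith [this.2]⟩
        have hWb : γ (-(σ + r)) * γ ((σ + r) + b) = γ b := (hJS hbJ).2
        calc γ ((σ + r) + b) = (γ (σ + r) * γ (-(σ + r))) * γ ((σ + r) + b) := by
              rw [hua, one_mul]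
          _ = γ (σ + r) * (γ (-(σ + r)) * γ ((σ + r) + b)) := mul_assoc _ _ _
          _ = γ (σ + r) * γ b := by rw [hWb]
      -- conclude the induction step
      intro a b ha hb
      by_cases hsmall : |a| ≤ ((n:ℝ) + 5) * δ
      · exact ih a b hsmall hb
      · push_neg at hsmall
        have h5 : 5 * δ < |a| := by rw [hexp] at hsmall; linarith
        set r : ℝ := if 0 ≤ a then δ else -δ with hrdef
        set σ : ℝ := a - r with hσdef
        have habsr : |r| = δ := by
          rw [hrdef]; split
          · exact abs_of_pos hδ
          · rw [abs_neg]; exact abs_of_pos hδ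
        have habsσ : |σ| = |a| - δ := by
          rcases le_or_gt 0 a with h0 | h0
          · have hapos : |a| = a := abs_of_nonneg h0
            have hσeq : σ = a - δ := by rw [hσdef, hrdef, if_pos h0]
            rw [hσeq, hapos, abs_of_nonneg (by rw [hapos] at h5; linarith)]
          · have haneg : |a| = -a := abs_of_neg h0
            have hσeq : σ = a + δ := by rw [hσdef, hrdef, if_neg (not_le.mpr h0)]; ring
            rw [hσeq, haneg, abs_of_neg (by rw [haneg] at h5; linarith)]
            ring
        have hcast : ((n + 1 : ℕ) : ℝ) + 5 = (n : ℝ) + 6 := by push_cast; ring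
        have ha6 : |a| ≤ ((n:ℝ) + 6) * δ := by rw [← hcast]; exact ha
        have hσn : |σ| ≤ ((n:ℝ) + 5) * δ := by
          rw [habsσ]
          have hexp6 : ((n:ℝ) + 6) * δ = ((n:ℝ) + 5) * δ + δ := by ring
          linarith [hexp6.le, hexp6.ge]
        have hr4 : |r| ≤ 4 * δ := by rw [habsr]; linarith
        have hfirst : γ (a + b) = γ a * γ b := by
          have := FE σ r hσn hr4 b hb
          rwa [show σ + r = a by rw [hσdef]; ring] at this
        refine ⟨hfirst, ?_⟩
        have e1 : γ a = γ σ * γ r := by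
          have := (ih σ r hσn hr4).1
          rwa [show σ + r = a by rw [hσdef]; ring] at this
        have h2' : γ (σ + b) = γ b * γ σ := (ih σ b hσn hb).2
        have h3' : γ ((σ + b) + r) = γ (σ + b) * γ r := FE σ b hσn hb r hr4
        calc γ (a + b) = γ ((σ + b) + r) := by
              congr 1
              rw [hσdef]; ring
          _ = γ (σ + b) * γ r := h3'
          _ = (γ b * γ σ) * γ r := by rw [h2']
          _ = γ b * (γ σ * γ r) := mul_assoc _ _ _
          _ = γ b * γ a := by rw [← e1]
  -- conclusion
  intro t
  obtain ⟨n, hn⟩ := exists_nat_ge (|t| / δ)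
  have htn : |t| ≤ ((n:ℝ) + 5) * δ := by
    rw [div_le_iff₀ hδ] at hn
    nlinarith
  have hu := unitsOf n (D n) t htn
  exact ⟨hu.2, hu.1, ⟨⟨γ t, γ (-t), hu.1, hu.2⟩, rfl⟩⟩
end
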